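/- Let R be a ring. The following are equivalent: (a) the dual Goldie torsion theory τ_cG is splitting and cohereditary, i.e. every left R-module M has submodules T and F with M = T ⊕ F, T τ_cG-torsion and F τ_cG-torsionfree, and moreover every homomorphic image of a τ_cG-torsionfree left R-module is τ_cG-torsionfree; (b) R is isomorphic as a ring to a direct product T × S, where T is a left almost small ring and S is a left V-ring. -/

import Mathlib

universe u

/-- A left `R`-module `K` is a *small module* if there exist a left `R`-module `L` and an
injective `R`-linear map `f : K → L` whose image is a superfluous submodule of `L`. -/
def IsSmallModule (R : Type u) [Ring R] (K : Type u) [AddCommGroup K] [Module R K] : Prop :=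
  ∃ (L : Type u) (_ : AddCommGroup L) (_ : Module R L) (f : K →ₗ[R] L),
    Function.Injective f ∧
      ∀ X : Submodule R L, LinearMap.range f ⊔ X = ⊤ → X = ⊤

/-- `Z*(M)` is the sum of all submodules of `M` that are small modules. -/
def ZStar (R : Type u) [Ring R] (M : Type u) [AddCommGroup M] [Module R M] : Submodule R M :=
  sSup {N : Submodule R M | IsSmallModule R ↥N}

/-- A left `R`-module `M` is `τ_cG`-torsion if `Z*(V/U) ≠ 0` for all submodules `U ⊊ V ⊆ M`. -/
def IsCGTorsion (R : Type u) [Ring R] (M : Type u) [AddCommGroup M] [Module R M] : Prop :=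
  ∀ U V : Submodule R M, U < V → ZStar R (↥V ⧸ Submodule.comap V.subtype U) ≠ ⊥

namespace Stmt10

variable {R : Type u} [Ring R]

section Basic

variable {M N : Type u} [AddCommGroup M] [Module R M] [AddCommGroup N] [Module R N]

theorem small_congr (e : M ≃ₗ[R] N) (h : IsSmallModule R M) : IsSmallModule R N := by
  obtain ⟨L, i1, i2, f, hinj, hsup⟩ := h
  refine ⟨L, i1, i2, f ∘ₗ (e.symm : N →ₗ[R] M), hinj.comp e.symm.injective, ?_⟩
  intro X hX
  apply hsup X
  rwa [LinearMap.range_comp, LinearEquiv.range, Submodule.map_top] at hX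

theorem small_map {p : Submodule R M} {K : Submodule R ↥p} (h : IsSmallModule R ↥K) :
    IsSmallModule R ↥(K.map p.subtype) :=
  small_congr (Submodule.equivMapOfInjective p.subtype p.injective_subtype K) h

theorem zstar_eq_bot_iff :
    ZStar R M = ⊥ ↔ ∀ P : Submodule R M, IsSmallModule R ↥P → P = ⊥ := by
  rw [ZStar, sSup_eq_bot]
  exact ⟨fun h P hP => h P hP, fun h P hP => h P hP⟩

theorem zstar_ne_bot_iff :
    ZStar R M ≠ ⊥ ↔ ∃ P : Submodule R M, IsSmallModule R ↥P ∧ P ≠ ⊥ := by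
  rw [Ne, zstar_eq_bot_iff]
  push_neg
  rfl

theorem zstar_bot_of_equiv (e : M ≃ₗ[R] N) (h : ZStar R M = ⊥) : ZStar R N = ⊥ := by
  rw [zstar_eq_bot_iff] at h ⊢
  intro P hP
  have h2 := h (P.map (e.symm : N →ₗ[R] M))
    (small_congr (Submodule.equivMapOfInjective _ e.symm.injective P) hP)
  rw [Submodule.eq_bot_iff] at h2 ⊢
  intro x hx
  have h3 := h2 (e.symm x) ⟨x, hx, rfl⟩
  have := congrArg e h3
  simpa using this

theorem zstar_congr (e : M ≃ₗ[R] N) : ZStar R M = ⊥ ↔ ZStar R N = ⊥ :=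
  ⟨zstar_bot_of_equiv e, zstar_bot_of_equiv e.symm⟩

theorem zstar_hered (h : ZStar R M = ⊥) (p : Submodule R M) : ZStar R ↥p = ⊥ := by
  rw [zstar_eq_bot_iff] at h ⊢
  intro K hK
  have h2 := h (K.map p.subtype) (small_map hK)
  rw [Submodule.eq_bot_iff] at h2 ⊢
  intro x hx
  exact Subtype.ext (h2 x.val ⟨x, hx, rfl⟩)

theorem zstar_ne_bot_of_sub {p : Submodule R M} (h : ZStar R ↥p ≠ ⊥) : ZStar R M ≠ ⊥ := by
  rw [zstar_ne_bot_iff] at h ⊢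
  obtain ⟨K, hK, hKne⟩ := h
  refine ⟨K.map p.subtype, small_map hK, ?_⟩
  rw [Submodule.ne_bot_iff] at hKne ⊢
  obtain ⟨x, hxK, hx⟩ := hKne
  exact ⟨x.val, ⟨x, hxK, rfl⟩, fun h0 => hx (Subtype.ext h0)⟩

theorem zstar_ne_bot_of_small [Nontrivial M] (h : IsSmallModule R M) : ZStar R M ≠ ⊥ := by
  rw [zstar_ne_bot_iff]
  refine ⟨⊤, small_congr (Submodule.topEquiv (R := R) (M := M)).symm h, ?_⟩
  intro h0
  obtain ⟨x, hx⟩ := exists_ne (0 : M)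
  have hx2 : x ∈ (⊥ : Submodule R M) := h0 ▸ (Submodule.mem_top (R := R))
  exact hx (by simpa using hx2)

theorem quot_nontrivial {U V : Submodule R M} (h : U < V) :
    Nontrivial (↥V ⧸ U.comap V.subtype) := by
  obtain ⟨x, hxV, hxU⟩ := SetLike.exists_of_lt h
  refine ⟨Submodule.Quotient.mk ⟨x, hxV⟩, 0, ?_⟩
  rw [Ne, Submodule.Quotient.mk_eq_zero]
  simpa using hxU

theorem torsion_sub (h : IsCGTorsion R M) {p : Submodule R M} (hp : p ≠ ⊥) :
    ZStar R ↥p ≠ ⊥ := by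
  have h0 := h ⊥ p (bot_lt_iff_ne_bot.mpr hp)
  have hc : Submodule.comap p.subtype (⊥ : Submodule R M) = ⊥ := by
    rw [Submodule.comap_bot, Submodule.ker_subtype]
  rw [hc] at h0
  exact fun hb => h0 ((zstar_congr (Submodule.quotEquivOfEqBot _ rfl)).mpr hb)

theorem torsion_image (h : IsCGTorsion R M) (g : M →ₗ[R] N)
    (hg : LinearMap.range g ≠ ⊥) : ZStar R ↥(LinearMap.range g) ≠ ⊥ := by
  have hker : LinearMap.ker g ≠ ⊤ := by
    intro h0
    apply hg
    rw [LinearMap.range_eq_bot]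
    exact LinearMap.ker_eq_top.mp h0
  have htor := h (LinearMap.ker g) ⊤ (lt_top_iff_ne_top.mpr hker)
  set h' : ↥(⊤ : Submodule R M) →ₗ[R] N := g ∘ₗ (⊤ : Submodule R M).subtype with hh'
  rw [← LinearMap.ker_comp] at htor
  have e1 := h'.quotKerEquivRange
  have hr : LinearMap.range h' = LinearMap.range g := by
    rw [hh', LinearMap.range_comp, Submodule.range_subtype, Submodule.map_top]
  intro hb
  exact htor ((zstar_congr e1).mpr (hr ▸ hb))

end Basic
end Stmt10
namespace Stmt10

section RetractSec

variable {R : Type u} [Ring R]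

structure Retract (R S : Type u) [Ring R] [Ring S] where
  π : R →+* S
  σ : S → R
  π_σ : ∀ s, π (σ s) = s
  σ_add : ∀ s t, σ (s + t) = σ s + σ t
  σ_mul : ∀ s t, σ (s * t) = σ s * σ t
  central : ∀ r, σ 1 * r = r * σ 1
  σ_π : ∀ r, σ (π r) = σ 1 * r

variable {S : Type u} [Ring S] (ρ : Retract R S)

theorem Retract.σ_zero : ρ.σ 0 = 0 := by
  have := ρ.σ_π 0
  rwa [map_zero, mul_zero] at this

theorem Retract.σ_one_idem : ρ.σ 1 * ρ.σ 1 = ρ.σ 1 := by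
  rw [← ρ.σ_mul, one_mul]

theorem Retract.one_sub_comm (r : R) : (1 - ρ.σ 1) * r = r * (1 - ρ.σ 1) := by
  rw [sub_mul, mul_sub, one_mul, mul_one, ρ.central]

/-- The `S`-module structure on an `R`-module killed by `1 - σ 1`. -/
def Retract.module (M : Type u) [AddCommGroup M] [Module R M]
    (hk : ∀ m : M, (1 - ρ.σ 1) • m = 0) : Module S M where
  smul s m := ρ.σ s • m
  one_smul m := by
    show ρ.σ 1 • m = m
    have h := hk m
    rw [sub_smul, one_smul, sub_eq_zero] at h
    exact h.symm
  mul_smul s t m := by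
    show ρ.σ (s * t) • m = ρ.σ s • ρ.σ t • m
    rw [ρ.σ_mul, mul_smul]
  smul_zero s := smul_zero _
  smul_add s x y := smul_add _ _ _
  add_smul s t m := by
    show ρ.σ (s + t) • m = ρ.σ s • m + ρ.σ t • m
    rw [ρ.σ_add, add_smul]
  zero_smul m := by
    show ρ.σ 0 • m = 0
    rw [ρ.σ_zero, zero_smul]

section TwoStructures

variable {M : Type u} [AddCommGroup M] [Module R M] [Module S M]
  (hc : ∀ (s : S) (m : M), s • m = ρ.σ s • m)

include hc

theorem Retract.σ_one_smul (m : M) : ρ.σ 1 • m = m := by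
  rw [← hc]; exact one_smul S m

theorem Retract.killed (m : M) : (1 - ρ.σ 1) • m = 0 := by
  rw [sub_smul, one_smul, ρ.σ_one_smul hc, sub_self]

theorem Retract.hc_pi (r : R) (m : M) : r • m = ρ.π r • m := by
  rw [hc, ρ.σ_π, ρ.central, mul_smul, ρ.σ_one_smul hc]

theorem Retract.small_R_of_small_S (h : IsSmallModule S M) : IsSmallModule R M := by
  obtain ⟨L, iA, iS, f, hinj, hsup⟩ := h
  letI iR : Module R L := Module.compHom L ρ.π
  have hpiL : ∀ (r : R) (l : L), r • l = ρ.π r • l := fun r l => rfl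
  let fR : M →ₗ[R] L :=
    { toFun := f
      map_add' := f.map_add
      map_smul' := fun r m => by
        show f (r • m) = r • f m
        rw [ρ.hc_pi hc r m, f.map_smul, hpiL] }
  refine ⟨L, iA, iR, fR, hinj, ?_⟩
  intro X hX
  let X_S : Submodule S L :=
    { carrier := (X : Set L)
      add_mem' := fun ha hb => X.add_mem ha hb
      zero_mem' := X.zero_mem
      smul_mem' := fun s x hx => by
        have hs : s • x = ρ.σ s • x := by
          show s • x = ρ.π (ρ.σ s) • x
          rw [ρ.π_σ]
        show s • x ∈ (X : Set L)
        rw [hs]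
        exact X.smul_mem _ hx }
  have hXS : X_S = ⊤ := by
    apply hsup
    rw [eq_top_iff]
    intro l _
    have hl : l ∈ LinearMap.range fR ⊔ X := by rw [hX]; trivial
    obtain ⟨a, ha, b, hb, hab⟩ := Submodule.mem_sup.mp hl
    obtain ⟨m, hm⟩ := ha
    exact Submodule.mem_sup.mpr ⟨a, LinearMap.mem_range.mpr ⟨m, hm⟩, b, hb, hab⟩
  rw [eq_top_iff]
  intro l _
  have : l ∈ X_S := by rw [hXS]; trivial
  exact this

theorem Retract.small_S_of_small_R (h : IsSmallModule R M) : IsSmallModule S M := by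
  obtain ⟨L, iA, iR, f, hinj, hsup⟩ := h
  let L₀ : Submodule R L :=
    { carrier := {x | (1 - ρ.σ 1) • x = 0}
      add_mem' := fun {a b} ha hb => by
        have ha' : (1 - ρ.σ 1) • a = 0 := ha
        have hb' : (1 - ρ.σ 1) • b = 0 := hb
        show (1 - ρ.σ 1) • (a + b) = 0
        rw [smul_add, ha', hb', add_zero]
      zero_mem' := by show (1 - ρ.σ 1) • (0 : L) = 0; rw [smul_zero]
      smul_mem' := fun r x hx => by
        have hx' : (1 - ρ.σ 1) • x = 0 := hx
        show (1 - ρ.σ 1) • (r • x) = 0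
        rw [← mul_smul, ρ.one_sub_comm, mul_smul, hx', smul_zero] }
  have hσ1 : ∀ y : L, y ∈ L₀ → ρ.σ 1 • y = y := by
    intro y hy
    have h' : (1 - ρ.σ 1) • y = 0 := hy
    rw [sub_smul, one_smul, sub_eq_zero] at h'
    exact h'.symm
  letI iS0 : Module S ↥L₀ := ρ.module ↥L₀ (fun x => Subtype.ext (by
    show (1 - ρ.σ 1) • (x : L) = 0
    exact x.2))
  have hsm0 : ∀ (s : S) (x : ↥L₀), ((s • x : ↥L₀) : L) = ρ.σ s • (x : L) := fun s x => rfl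
  have hfmem : ∀ m : M, f m ∈ L₀ := by
    intro m
    show (1 - ρ.σ 1) • f m = 0
    rw [← f.map_smul, ρ.killed hc, f.map_zero]
  let f₀ : M →ₗ[S] ↥L₀ :=
    { toFun := fun m => ⟨f m, hfmem m⟩
      map_add' := fun a b => Subtype.ext (f.map_add a b)
      map_smul' := fun s m => Subtype.ext (by
        show f (s • m) = ρ.σ s • f m
        rw [hc, f.map_smul]) }
  refine ⟨↥L₀, inferInstance, iS0, f₀, fun a b hab => hinj (congrArg Subtype.val hab), ?_⟩
  intro X hX
  let X' : Submodule R L :=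
    { carrier := Subtype.val '' (X : Set ↥L₀)
      zero_mem' := ⟨0, X.zero_mem, rfl⟩
      add_mem' := fun {a b} ha hb => by
        obtain ⟨x, hx, hxa⟩ := ha
        obtain ⟨y, hy, hyb⟩ := hb
        exact ⟨x + y, X.add_mem hx hy, by rw [Submodule.coe_add, hxa, hyb]⟩
      smul_mem' := fun r a ha => by
        obtain ⟨x, hx, hxa⟩ := ha
        refine ⟨ρ.π r • x, X.smul_mem _ hx, ?_⟩
        rw [hsm0, ρ.σ_π, ρ.central, mul_smul, hσ1 _ x.2, hxa] }
  let Lc : Submodule R L :=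
    { carrier := {x | ρ.σ 1 • x = 0}
      add_mem' := fun {a b} ha hb => by
        have ha' : ρ.σ 1 • a = 0 := ha
        have hb' : ρ.σ 1 • b = 0 := hb
        show ρ.σ 1 • (a + b) = 0
        rw [smul_add, ha', hb', add_zero]
      zero_mem' := by show ρ.σ 1 • (0 : L) = 0; rw [smul_zero]
      smul_mem' := fun r x hx => by
        have hx' : ρ.σ 1 • x = 0 := hx
        show ρ.σ 1 • (r • x) = 0
        rw [← mul_smul, ρ.central, mul_smul, hx', smul_zero] }
  have hsup2 : LinearMap.range f ⊔ (X' ⊔ Lc) = ⊤ := by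
    rw [eq_top_iff]
    intro l _
    have hdec : l = ρ.σ 1 • l + (1 - ρ.σ 1) • l := by
      rw [← add_smul, add_sub_cancel, one_smul]
    have h1 : ρ.σ 1 • l ∈ L₀ := by
      show (1 - ρ.σ 1) • (ρ.σ 1 • l) = 0
      rw [← mul_smul, sub_mul, one_mul, ρ.σ_one_idem, sub_self, zero_smul]
    have h2 : (1 - ρ.σ 1) • l ∈ Lc := by
      show ρ.σ 1 • ((1 - ρ.σ 1) • l) = 0
      rw [← mul_smul, mul_sub, mul_one, ρ.σ_one_idem, sub_self, zero_smul]
    have h3 : (⟨ρ.σ 1 • l, h1⟩ : ↥L₀) ∈ LinearMap.range f₀ ⊔ X := by rw [hX]; trivial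
    obtain ⟨a, ha, b, hb, hab⟩ := Submodule.mem_sup.mp h3
    obtain ⟨m, ham⟩ := ha
    have ham' : f m = (a : L) := congrArg Subtype.val ham
    have hab' : (a : L) + (b : L) = ρ.σ 1 • l := congrArg Subtype.val hab
    apply Submodule.mem_sup.mpr
    refine ⟨f m, LinearMap.mem_range.mpr ⟨m, rfl⟩,
      (b : L) + (1 - ρ.σ 1) • l,
      Submodule.mem_sup.mpr ⟨(b : L), ⟨b, hb, rfl⟩, (1 - ρ.σ 1) • l, h2, rfl⟩, ?_⟩
    rw [← add_assoc, ham', hab', ← hdec]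
  have hXL : X' ⊔ Lc = ⊤ := hsup (X' ⊔ Lc) hsup2
  rw [eq_top_iff]
  intro y _
  have hy : (y : L) ∈ X' ⊔ Lc := by rw [hXL]; trivial
  obtain ⟨a, haX, b, hbLc, hab⟩ := Submodule.mem_sup.mp hy
  obtain ⟨x, hxX, hxa⟩ := haX
  have hb0 : ρ.σ 1 • b = 0 := hbLc
  have ha1 : ρ.σ 1 • a = a := by
    apply hσ1
    rw [← hxa]
    exact x.2
  have hya : (y : L) = a := by
    have := hσ1 (y : L) y.2
    rw [← hab, smul_add, ha1, hb0, add_zero] at this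
    rw [← hab]
    exact this.symm
  have hyx : y = x := Subtype.ext (by rw [hya, ← hxa])
  rw [hyx]
  exact hxX


theorem Retract.small_transfer_S_to_R (Q : Submodule S M) (hQ : IsSmallModule S ↥Q) :
    ∃ P : Submodule R M, (P : Set M) = (Q : Set M) ∧ IsSmallModule R ↥P := by
  let P : Submodule R M :=
    { carrier := (Q : Set M)
      add_mem' := fun ha hb => Q.add_mem ha hb
      zero_mem' := Q.zero_mem
      smul_mem' := fun r m hm => by
        show r • m ∈ Q
        rw [ρ.hc_pi hc]
        exact Q.smul_mem _ hm }
  letI iSP : Module S ↥P := ρ.module ↥P (fun x => Subtype.ext (by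
    show (1 - ρ.σ 1) • (x : M) = 0
    exact ρ.killed hc _))
  have hcP : ∀ (s : S) (x : ↥P), s • x = ρ.σ s • x := fun s x => rfl
  have hinst : iSP = Q.module := Module.ext' _ _ (fun s x => Subtype.ext ((hc s x.val).symm))
  have hsm : @IsSmallModule S _ ↥P _ iSP := by
    rw [hinst]
    exact hQ
  exact ⟨P, rfl, ρ.small_R_of_small_S hcP hsm⟩

theorem Retract.small_transfer_R_to_S (P : Submodule R M) (hP : IsSmallModule R ↥P) :
    ∃ Q : Submodule S M, (Q : Set M) = (P : Set M) ∧ IsSmallModule S ↥Q := by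
  let Q : Submodule S M :=
    { carrier := (P : Set M)
      add_mem' := fun ha hb => P.add_mem ha hb
      zero_mem' := P.zero_mem
      smul_mem' := fun s m hm => by
        show s • m ∈ P
        rw [hc]
        exact P.smul_mem _ hm }
  letI iRQ : Module R ↥Q := Module.compHom ↥Q ρ.π
  have hcQ : ∀ (s : S) (x : ↥Q), s • x = ρ.σ s • x := by
    intro s x
    show s • x = ρ.π (ρ.σ s) • x
    rw [ρ.π_σ]
  have hinst : iRQ = P.module := Module.ext' _ _ (fun r x => Subtype.ext ((ρ.hc_pi hc r x.val).symm))
  have hsm : @IsSmallModule R _ ↥Q _ iRQ := by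
    rw [hinst]
    exact hP
  exact ⟨Q, rfl, ρ.small_S_of_small_R hcQ hsm⟩

theorem Retract.zstar_transfer : ZStar S M = ⊥ ↔ ZStar R M = ⊥ := by
  constructor
  · intro h
    rw [zstar_eq_bot_iff] at h ⊢
    intro P hP
    obtain ⟨Q, hQP, hQ⟩ := ρ.small_transfer_R_to_S hc P hP
    have hQb := h Q hQ
    rw [Submodule.eq_bot_iff] at hQb ⊢
    intro x hx
    refine hQb x ?_
    have hx' : x ∈ (P : Set M) := hx
    rw [← hQP] at hx'
    exact hx'
  · intro h
    rw [zstar_eq_bot_iff] at h ⊢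
    intro Q hQ
    obtain ⟨P, hPQ, hP⟩ := ρ.small_transfer_S_to_R hc Q hQ
    have hPb := h P hP
    rw [Submodule.eq_bot_iff] at hPb ⊢
    intro x hx
    refine hPb x ?_
    have hx' : x ∈ (Q : Set M) := hx
    rw [← hPQ] at hx'
    exact hx'

end TwoStructures

end RetractSec
end Stmt10
namespace Stmt10

section Injectives

variable {S : Type u} [Ring S]

theorem injective_congr {A B : Type u} [AddCommGroup A] [Module S A] [AddCommGroup B] [Module S B]
    (e : A ≃ₗ[S] B) (h : Module.Injective S A) : Module.Injective S B where
  out X Y _ _ _ _ f hf g := by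
    obtain ⟨h', hh'⟩ := h.out f hf ((e.symm : B →ₗ[S] A) ∘ₗ g)
    refine ⟨(e : A →ₗ[S] B) ∘ₗ h', fun x => ?_⟩
    have h2 := hh' x
    show (e : A →ₗ[S] B) (h' (f x)) = g x
    rw [h2]
    show e (((e.symm : B →ₗ[S] A)) (g x)) = g x
    rw [LinearEquiv.coe_coe, LinearEquiv.apply_symm_apply]

theorem injective_of_isCompl {E : Type u} [AddCommGroup E] [Module S E]
    (hE : Module.Injective S E) {p q : Submodule S E} (h : IsCompl p q) :
    Module.Injective S ↥p where
  out X Y _ _ _ _ f hf g := by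
    obtain ⟨h', hh'⟩ := hE.out f hf (p.subtype ∘ₗ g)
    refine ⟨(p.linearProjOfIsCompl q h) ∘ₗ h', fun x => ?_⟩
    show p.linearProjOfIsCompl q h (h' (f x)) = g x
    rw [hh' x]
    show p.linearProjOfIsCompl q h ((g x : E)) = g x
    exact Submodule.linearProjOfIsCompl_apply_left h (g x)

theorem exists_embedding_injective (S M : Type u) [Ring S] [AddCommGroup M] [Module S M] :
    ∃ (E : Type u) (_ : AddCommGroup E) (_ : Module S E) (i : M →ₗ[S] E),
      Function.Injective i ∧ Module.Injective S E := by
  letI : CategoryTheory.EnoughInjectives (ModuleCat.{u} S) := ModuleCat.enoughInjectives.{u, u} S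
  let Mc : ModuleCat.{u} S := ModuleCat.of S M
  let E : ModuleCat.{u} S := CategoryTheory.Injective.under Mc
  let ι : Mc ⟶ E := CategoryTheory.Injective.ι Mc
  haveI hEinj : CategoryTheory.Injective (ModuleCat.of S E) :=
    CategoryTheory.Injective.injective_under Mc
  refine ⟨E, inferInstance, inferInstance, ι.hom, ?_, ?_⟩
  · haveI : CategoryTheory.Mono ι := CategoryTheory.Injective.ι_mono Mc
    exact (ModuleCat.mono_iff_injective ι).mp this
  · exact Module.injective_module_of_injective_object S E

theorem vring_small
    (hV : ∀ (W : Type u) [AddCommGroup W] [Module S W], IsSimpleModule S W → Module.Injective S W)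
    {K : Type u} [AddCommGroup K] [Module S K] (h : IsSmallModule S K) (x : K) : x = 0 := by
  by_contra hx
  obtain ⟨L, iA, iM, f, hinj, hsup⟩ := h
  have hx' : f x ≠ 0 := fun h0 => hx (hinj (by rw [h0, f.map_zero]))
  have hxC : f x ∈ Submodule.span S {f x} := Submodule.mem_span_singleton_self _
  set C : Submodule S L := Submodule.span S {f x} with hC
  set g : ↥C := ⟨f x, hxC⟩ with hg
  have hgne : g ≠ 0 := fun h0 => hx' (congrArg Subtype.val h0)
  obtain ⟨U, hU⟩ : ∃ U, Maximal (· ∈ {U : Submodule S ↥C | g ∉ U}) U := by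
    apply zorn_le₀
    intro c hcsub hchain
    by_cases hc0 : c.Nonempty
    · refine ⟨sSup c, ?_, fun z hz => le_sSup hz⟩
      intro hmem
      rw [Submodule.mem_sSup_of_directed hc0 hchain.directedOn] at hmem
      obtain ⟨y, hy, hgy⟩ := hmem
      exact hcsub hy hgy
    · refine ⟨⊥, ?_, fun z hz => absurd ⟨z, hz⟩ hc0⟩
      intro hmem
      exact hgne ((Submodule.mem_bot S).mp hmem)
  have hgU : g ∉ U := hU.prop
  have hcyc : ∀ c : ↥C, ∃ s : S, c = s • g := by
    intro c
    obtain ⟨s, hs⟩ := Submodule.mem_span_singleton.mp (c.2 : (c : L) ∈ C)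
    exact ⟨s, Subtype.ext hs.symm⟩
  have hcoatom : IsCoatom U := by
    constructor
    · intro h0
      exact hgU (h0 ▸ Submodule.mem_top)
    · intro V hUV
      have hgV : g ∈ V := by
        by_contra hgV
        exact (not_le_of_gt hUV) (hU.2 hgV hUV.le)
      rw [eq_top_iff]
      intro c _
      obtain ⟨s, hs⟩ := hcyc c
      rw [hs]
      exact V.smul_mem s hgV
  haveI hsimple : IsSimpleModule S (↥C ⧸ U) := isSimpleModule_iff_isCoatom.mpr hcoatom
  have hinjQ : Module.Injective S (↥C ⧸ U) := hV _ hsimple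
  obtain ⟨h', hh'⟩ := hinjQ.out C.subtype C.injective_subtype U.mkQ
  have hgq : h' (f x) = Submodule.Quotient.mk g := hh' g
  have hsup2 : LinearMap.range f ⊔ LinearMap.ker h' = ⊤ := by
    rw [eq_top_iff]
    intro l _
    obtain ⟨c, hc⟩ := Submodule.Quotient.mk_surjective U (h' l)
    obtain ⟨s, hs⟩ := hcyc c
    have hls : h' l = h' (f (s • x)) := by
      rw [← hc, hs, Submodule.Quotient.mk_smul, map_smul f s x, map_smul h', hgq]
    have hlf : l - f (s • x) ∈ LinearMap.ker h' := by
      rw [LinearMap.mem_ker, map_sub, hls, sub_self]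
    exact Submodule.mem_sup.mpr ⟨f (s • x), ⟨s • x, rfl⟩, l - f (s • x), hlf, by abel⟩
  have hker : LinearMap.ker h' = ⊤ := hsup _ hsup2
  have h0 : h' (f x) = 0 := by
    have hmem : f x ∈ LinearMap.ker h' := hker ▸ Submodule.mem_top
    exact hmem
  rw [hgq] at h0
  exact hgU ((Submodule.Quotient.mk_eq_zero U).mp h0)

end Injectives
end Stmt10
namespace Stmt10

section SimpleNotInj

variable {S : Type u} [Ring S]

theorem small_of_simple_not_injective {M : Type u} [AddCommGroup M] [Module S M]
    (hsimp : IsSimpleModule S M) (hninj : ¬ Module.Injective S M) : IsSmallModule S M := by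
  obtain ⟨E, iE1, iE2, i, hi, hEinj⟩ := exists_embedding_injective S M
  obtain ⟨X, hX⟩ :
      ∃ X, Maximal (· ∈ {X : Submodule S E | Disjoint (LinearMap.range i) X}) X := by
    apply zorn_le₀
    intro c hcsub hchain
    by_cases hc0 : c.Nonempty
    · refine ⟨sSup c, ?_, fun z hz => le_sSup hz⟩
      rw [Set.mem_setOf_eq, Submodule.disjoint_def]
      intro y hyr hys
      rw [Submodule.mem_sSup_of_directed hc0 hchain.directedOn] at hys
      obtain ⟨Y, hY, hyY⟩ := hys
      exact Submodule.disjoint_def.mp (hcsub hY) y hyr hyY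
    · exact ⟨⊥, disjoint_bot_right, fun z hz => absurd ⟨z, hz⟩ hc0⟩
  set j : M →ₗ[S] (E ⧸ X) := X.mkQ ∘ₗ i with hjdef
  have hjapp : ∀ m : M, j m = Submodule.Quotient.mk (i m) := fun m => rfl
  have hjinj : Function.Injective j := by
    rw [injective_iff_map_eq_zero]
    intro m hm
    rw [hjapp, Submodule.Quotient.mk_eq_zero] at hm
    have h2 : i m = 0 := Submodule.disjoint_def.mp hX.prop _ ⟨m, rfl⟩ hm
    exact hi (by rw [h2, map_zero])
  haveI := hsimp
  haveI hrs : IsSimpleModule S ↥(LinearMap.range j) :=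
    IsSimpleModule.congr (LinearEquiv.ofInjective j hjinj).symm
  have hdich : ∀ Z : Submodule S (E ⧸ X), LinearMap.range j ⊔ Z = ⊤ →
      Z = ⊤ ∨ LinearMap.range j = ⊤ := by
    intro Z hZ
    by_cases hd : Disjoint (LinearMap.range j) Z
    · right
      have hmemset : Submodule.comap X.mkQ Z ∈ {X : Submodule S E | Disjoint (LinearMap.range i) X} := by
        rw [Set.mem_setOf_eq, Submodule.disjoint_def]
        intro y hyr hyc
        obtain ⟨m, rfl⟩ := hyr
        have hjz : j m ∈ Z := hyc
        have h0 : j m = 0 :=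
          Submodule.disjoint_def.mp hd _ ⟨m, rfl⟩ hjz
        rw [(injective_iff_map_eq_zero j).mp hjinj m h0, map_zero]
      have hle : X ≤ Submodule.comap X.mkQ Z := by
        intro x hx
        show X.mkQ x ∈ Z
        have h0 : X.mkQ x = 0 := by
          rw [Submodule.mkQ_apply, Submodule.Quotient.mk_eq_zero]
          exact hx
        rw [h0]
        exact Z.zero_mem
      have hXZ : Submodule.comap X.mkQ Z = X := le_antisymm (hX.2 hmemset hle) hle
      have hZbot : Z = ⊥ := by
        have hmc := Submodule.map_comap_eq_of_surjective (X.mkQ_surjective) Z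
        rw [hXZ] at hmc
        rw [← hmc, eq_bot_iff]
        rintro y ⟨x, hxX, rfl⟩
        show X.mkQ x ∈ (⊥ : Submodule S (E ⧸ X))
        rw [Submodule.mem_bot, Submodule.mkQ_apply, Submodule.Quotient.mk_eq_zero]
        exact hxX
      rw [hZbot, sup_bot_eq] at hZ
      exact hZ
    · left
      have hle : LinearMap.range j ≤ Z := by
        rcases eq_bot_or_eq_top (Submodule.comap (LinearMap.range j).subtype Z) with hb | ht
        · exfalso
          apply hd
          rw [Submodule.disjoint_def]
          intro y hyr hyZ
          have : (⟨y, hyr⟩ : ↥(LinearMap.range j)) ∈ Submodule.comap (LinearMap.range j).subtype Z := hyZ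
          rw [hb] at this
          exact congrArg Subtype.val ((Submodule.mem_bot S).mp this)
        · intro y hyr
          have : (⟨y, hyr⟩ : ↥(LinearMap.range j)) ∈ Submodule.comap (LinearMap.range j).subtype Z := by
            rw [ht]; trivial
          exact this
      rw [sup_eq_right.mpr hle] at hZ
      exact hZ
  by_cases hrj : LinearMap.range j = ⊤
  · exfalso
    apply hninj
    have hcompl : IsCompl (LinearMap.range i) X := by
      constructor
      · exact hX.prop
      · rw [codisjoint_iff, eq_top_iff]
        intro q _
        have hq : X.mkQ q ∈ LinearMap.range j := hrj ▸ Submodule.mem_top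
        obtain ⟨m, hm⟩ := hq
        have hqm : q - i m ∈ X := by
          rw [← Submodule.Quotient.eq]
          rw [← hjapp m, hm, Submodule.mkQ_apply]
        exact Submodule.mem_sup.mpr ⟨i m, ⟨m, rfl⟩, q - i m, hqm, by abel⟩
    exact injective_congr (LinearEquiv.ofInjective i hi).symm (injective_of_isCompl hEinj hcompl)
  · refine ⟨E ⧸ X, inferInstance, inferInstance, j, hjinj, ?_⟩
    intro Z hZ
    rcases hdich Z hZ with h | h
    · exact h
    · exact absurd h hrj

end SimpleNotInj
end Stmt10
namespace Stmt10

section Con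

variable {R : Type u} [Ring R]

def GoodIdem (R : Type u) [Ring R] (e : R) : Prop :=
  e * e = e ∧ (∀ r : R, e * r = r * e) ∧
  (∀ (M : Type u) [AddCommGroup M] [Module R M],
      (∀ m : M, (1 - e) • m = 0) → (∃ m : M, m ≠ 0) → ZStar R M ≠ ⊥) ∧
  (∀ (M : Type u) [AddCommGroup M] [Module R M],
      (∀ m : M, e • m = 0) → ZStar R M = ⊥)

def idemCon (e : R) (hcen : ∀ r : R, e * r = r * e) : RingCon R where
  r a b := e * a = e * b
  iseqv := ⟨fun _ => rfl, Eq.symm, Eq.trans⟩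
  add' := by
    intro a b c d h1 h2
    show e * (a + c) = e * (b + d)
    rw [mul_add, mul_add, h1, h2]
  mul' := by
    intro a b c d h1 h2
    show e * (a * c) = e * (b * d)
    rw [← mul_assoc, h1, hcen b, mul_assoc, h2, ← mul_assoc, ← hcen b, mul_assoc]

def idemRetract (e : R) (he : e * e = e) (hcen : ∀ r : R, e * r = r * e) :
    Retract R (idemCon e hcen).Quotient where
  π := (idemCon e hcen).mk'
  σ := fun t => Quotient.lift (fun r : R => e * r) (fun a b h => h) t
  π_σ := fun s => Quotient.inductionOn s (fun a => by
    show ((e * a : R) : (idemCon e hcen).Quotient) = (a : (idemCon e hcen).Quotient)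
    rw [RingCon.eq]
    show e * (e * a) = e * a
    rw [← mul_assoc, he])
  σ_add := fun s t => Quotient.inductionOn₂ s t (fun a b => by
    show e * (a + b) = e * a + e * b
    rw [mul_add])
  σ_mul := fun s t => Quotient.inductionOn₂ s t (fun a b => by
    show e * (a * b) = (e * a) * (e * b)
    rw [← mul_assoc, ← mul_assoc (e*a) e b, mul_assoc e a e, ← hcen a, ← mul_assoc, he])
  central := fun r => by
    show (e * 1) * r = r * (e * 1)
    rw [mul_one, hcen]
  σ_π := fun r => by
    show e * r = (e * 1) * r
    rw [mul_one]

theorem idemRetract_π_eq (e : R) (he : e * e = e) (hcen : ∀ r : R, e * r = r * e)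
    (x : R) (hx : e * x = 0) : (idemRetract e he hcen).π x = 0 := by
  have h0 : (0 : (idemCon e hcen).Quotient) = (idemRetract e he hcen).π 0 :=
    (map_zero _).symm
  rw [h0]
  show ((x : R) : (idemCon e hcen).Quotient) = ((0 : R) : (idemCon e hcen).Quotient)
  rw [RingCon.eq]
  show e * x = e * 0
  rw [hx, mul_zero]

end Con
end Stmt10
namespace Stmt10

section RHS

variable {R : Type u} [Ring R]

theorem rhs_of_good (h : ∃ e : R, GoodIdem R e) :
    ∃ (T S : Type u) (_ : Ring T) (_ : Ring S),
      Nonempty (R ≃+* T × S) ∧ IsCGTorsion T T ∧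
        (∀ (M : Type u) [AddCommGroup M] [Module S M], IsSimpleModule S M →
          Module.Injective S M) := by
  obtain ⟨e, he, hcen, hP, hQ⟩ := h
  have hf : (1 - e) * (1 - e) = 1 - e := by
    rw [sub_mul, mul_sub, mul_sub, one_mul, one_mul, mul_one, he]
    abel
  have hcenf : ∀ r : R, (1 - e) * r = r * (1 - e) := fun r => by
    rw [sub_mul, mul_sub, one_mul, mul_one, hcen]
  let ρT := idemRetract e he hcen
  let ρS := idemRetract (1 - e) hf hcenf
  have hπT1e : ρT.π (1 - e) = 0 :=
    idemRetract_π_eq e he hcen (1 - e) (by rw [mul_sub, mul_one, he, sub_self])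
  have hπSe : ρS.π e = 0 :=
    idemRetract_π_eq (1 - e) hf hcenf e (by rw [sub_mul, one_mul, he, sub_self])
  -- the ring equivalence
  have hbij : Function.Bijective ((ρT.π).prod (ρS.π)) := by
    constructor
    · intro a b hab
      have h1 : ρT.π a = ρT.π b := congrArg Prod.fst hab
      have h2 : ρS.π a = ρS.π b := congrArg Prod.snd hab
      have h1' : e * a = e * b := (idemCon e hcen).eq.mp h1
      have h2' : (1 - e) * a = (1 - e) * b := (idemCon (1 - e) hcenf).eq.mp h2
      have ha : a = e * a + (1 - e) * a := by rw [← add_mul, add_sub_cancel, one_mul]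
      have hb2 : b = e * b + (1 - e) * b := by rw [← add_mul, add_sub_cancel, one_mul]
      rw [ha, hb2, h1', h2']
    · rintro ⟨x, y⟩
      refine Quotient.inductionOn₂ x y (fun a b => ⟨e * a + (1 - e) * b, Prod.ext ?_ ?_⟩)
      · show ((e * a + (1 - e) * b : R) : (idemCon e hcen).Quotient) = (a : (idemCon e hcen).Quotient)
        rw [RingCon.eq]
        show e * (e * a + (1 - e) * b) = e * a
        rw [mul_add, ← mul_assoc, he, ← mul_assoc, mul_sub, mul_one, he, sub_self, zero_mul,
          add_zero]
      · show ((e * a + (1 - e) * b : R) : (idemCon (1 - e) hcenf).Quotient) =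
          (b : (idemCon (1 - e) hcenf).Quotient)
        rw [RingCon.eq]
        show (1 - e) * (e * a + (1 - e) * b) = (1 - e) * b
        rw [mul_add, ← mul_assoc, ← mul_assoc, sub_mul, one_mul, he, sub_self, zero_mul, hf,
          zero_add]
  refine ⟨(idemCon e hcen).Quotient, (idemCon (1 - e) hcenf).Quotient, inferInstance,
    inferInstance, ⟨RingEquiv.ofBijective _ hbij⟩, ?_, ?_⟩
  · -- torsion
    intro U V hUV
    haveI hnt := quot_nontrivial hUV
    letI iR : Module R (↥V ⧸ Submodule.comap V.subtype U) := Module.compHom _ ρT.π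
    have hcW : ∀ (s : (idemCon e hcen).Quotient) (w : ↥V ⧸ Submodule.comap V.subtype U),
        s • w = ρT.σ s • w := by
      intro s w
      show s • w = ρT.π (ρT.σ s) • w
      rw [ρT.π_σ]
    have hkW : ∀ w : ↥V ⧸ Submodule.comap V.subtype U, (1 - e) • w = 0 := by
      intro w
      show ρT.π (1 - e) • w = 0
      rw [hπT1e, zero_smul]
    have hnz : ∃ w : ↥V ⧸ Submodule.comap V.subtype U, w ≠ 0 := exists_ne 0
    have hZR := hP _ hkW hnz
    intro hb
    exact hZR ((ρT.zstar_transfer hcW).mp hb)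
  · -- V-ring
    intro M iM1 iM2 hsimp
    by_contra hninj
    have hsm : IsSmallModule _ M := small_of_simple_not_injective hsimp hninj
    letI iR : Module R M := Module.compHom _ ρS.π
    have hcM : ∀ (s : (idemCon (1 - e) hcenf).Quotient) (m : M), s • m = ρS.σ s • m := by
      intro s m
      show s • m = ρS.π (ρS.σ s) • m
      rw [ρS.π_σ]
    have hsmR : IsSmallModule R M := ρS.small_R_of_small_S hcM hsm
    have hkM : ∀ m : M, e • m = 0 := by
      intro m
      show ρS.π e • m = 0
      rw [hπSe, zero_smul]
    have hZ := hQ M hkM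
    haveI : Nontrivial M := by
      haveI := hsimp
      exact IsSimpleModule.nontrivial (idemCon (1 - e) hcenf).Quotient M
    exact zstar_ne_bot_of_small hsmR hZ

end RHS
end Stmt10
namespace Stmt10

section GOR

variable {R : Type u} [Ring R]

theorem good_of_rhs {T S : Type u} [Ring T] [Ring S] (φ : R ≃+* T × S)
    (hT : IsCGTorsion T T)
    (hS : ∀ (M : Type u) [AddCommGroup M] [Module S M], IsSimpleModule S M →
        Module.Injective S M) :
    ∃ e : R, GoodIdem R e := by
  have hinj : Function.Injective φ := φ.injective
  let ρT : Retract R T :=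
    { π := (RingHom.fst T S).comp (φ : R →+* T × S)
      σ := fun t => φ.symm (t, 0)
      π_σ := fun t => by
        show (φ (φ.symm (t, 0))).1 = t
        rw [RingEquiv.apply_symm_apply]
      σ_add := fun s t => by
        show φ.symm (s + t, 0) = φ.symm (s, 0) + φ.symm (t, 0)
        rw [← map_add]
        congr 1
        rw [Prod.mk_add_mk, add_zero]
      σ_mul := fun s t => by
        show φ.symm (s * t, 0) = φ.symm (s, 0) * φ.symm (t, 0)
        rw [← map_mul]
        congr 1
        rw [Prod.mk_mul_mk, mul_zero]
      central := fun r => by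
        apply hinj
        show φ (φ.symm (1, 0) * r) = φ (r * φ.symm (1, 0))
        rw [map_mul, map_mul, RingEquiv.apply_symm_apply]
        apply Prod.ext
        · show 1 * (φ r).1 = (φ r).1 * 1
          rw [one_mul, mul_one]
        · show 0 * (φ r).2 = (φ r).2 * 0
          rw [zero_mul, mul_zero]
      σ_π := fun r => by
        apply hinj
        show φ (φ.symm ((φ r).1, 0)) = φ (φ.symm (1, 0) * r)
        rw [RingEquiv.apply_symm_apply, map_mul, RingEquiv.apply_symm_apply]
        apply Prod.ext
        · show (φ r).1 = 1 * (φ r).1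
          rw [one_mul]
        · show (0 : S) = 0 * (φ r).2
          rw [zero_mul] }
  let ρS : Retract R S :=
    { π := (RingHom.snd T S).comp (φ : R →+* T × S)
      σ := fun s => φ.symm (0, s)
      π_σ := fun t => by
        show (φ (φ.symm (0, t))).2 = t
        rw [RingEquiv.apply_symm_apply]
      σ_add := fun s t => by
        show φ.symm (0, s + t) = φ.symm (0, s) + φ.symm (0, t)
        rw [← map_add]
        congr 1
        rw [Prod.mk_add_mk, add_zero]
      σ_mul := fun s t => by
        show φ.symm (0, s * t) = φ.symm (0, s) * φ.symm (0, t)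
        rw [← map_mul]
        congr 1
        rw [Prod.mk_mul_mk, mul_zero]
      central := fun r => by
        apply hinj
        show φ (φ.symm (0, 1) * r) = φ (r * φ.symm (0, 1))
        rw [map_mul, map_mul, RingEquiv.apply_symm_apply]
        apply Prod.ext
        · show 0 * (φ r).1 = (φ r).1 * 0
          rw [zero_mul, mul_zero]
        · show 1 * (φ r).2 = (φ r).2 * 1
          rw [one_mul, mul_one]
      σ_π := fun r => by
        apply hinj
        show φ (φ.symm (0, (φ r).2)) = φ (φ.symm (0, 1) * r)
        rw [RingEquiv.apply_symm_apply, map_mul, RingEquiv.apply_symm_apply]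
        apply Prod.ext
        · show (0 : T) = 0 * (φ r).1
          rw [zero_mul]
        · show (φ r).2 = 1 * (φ r).2
          rw [one_mul] }
  set e : R := φ.symm (1, 0) with hedef
  have hσT1 : ρT.σ 1 = e := rfl
  have hσS1 : ρS.σ 1 = 1 - e := by
    show φ.symm (0, 1) = 1 - φ.symm (1, 0)
    apply hinj
    rw [RingEquiv.apply_symm_apply, map_sub, map_one, RingEquiv.apply_symm_apply]
    apply Prod.ext
    · show (0 : T) = 1 - 1
      rw [sub_self]
    · show (1 : S) = 1 - 0
      rw [sub_zero]
  have he : e * e = e := by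
    apply hinj
    rw [map_mul, hedef, RingEquiv.apply_symm_apply]
    apply Prod.ext
    · show (1 : T) * 1 = 1
      rw [one_mul]
    · show (0 : S) * 0 = 0
      rw [mul_zero]
  have hcen : ∀ r : R, e * r = r * e := fun r => by
    have := ρT.central r
    rwa [hσT1] at this
  have hπTe1 : ρT.π (1 - e) = 0 := by
    show (φ (1 - e)).1 = 0
    rw [map_sub, map_one, hedef, RingEquiv.apply_symm_apply]
    show (1 : T) - 1 = 0
    rw [sub_self]
  have hπSe : ρS.π e = 0 := by
    show (φ e).2 = 0
    rw [hedef, RingEquiv.apply_symm_apply]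
  refine ⟨e, he, hcen, ?_, ?_⟩
  · -- P part
    intro M iM1 iM2 hk hnz
    letI iT : Module T M := ρT.module M (by
      intro m
      have := hk m
      rwa [← hσT1] at this)
    have hcM : ∀ (s : T) (m : M), s • m = ρT.σ s • m := fun s m => rfl
    obtain ⟨x, hx⟩ := hnz
    set g : T →ₗ[T] M := LinearMap.toSpanSingleton T M x with hgdef
    have hker : LinearMap.ker g ≠ ⊤ := by
      intro h0
      apply hx
      have h1 : (1 : T) ∈ LinearMap.ker g := h0 ▸ Submodule.mem_top
      rw [LinearMap.mem_ker] at h1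
      rw [hgdef] at h1
      rw [LinearMap.toSpanSingleton_apply, one_smul] at h1
      exact h1
    have htor1 := hT (LinearMap.ker g) ⊤ (lt_top_iff_ne_top.mpr hker)
    set h' : ↥(⊤ : Submodule T T) →ₗ[T] M := g ∘ₗ (⊤ : Submodule T T).subtype with hh'
    rw [← LinearMap.ker_comp] at htor1
    have hZr : ZStar T ↥(LinearMap.range h') ≠ ⊥ := fun hb =>
      htor1 ((zstar_congr h'.quotKerEquivRange).mpr hb)
    rw [zstar_ne_bot_iff] at hZr
    obtain ⟨K, hKsm, hKne⟩ := hZr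
    have hKsm' : IsSmallModule T ↥(K.map (LinearMap.range h').subtype) := small_map hKsm
    have hK'ne : K.map (LinearMap.range h').subtype ≠ ⊥ := by
      rw [Submodule.ne_bot_iff] at hKne ⊢
      obtain ⟨y, hyK, hy⟩ := hKne
      exact ⟨y.val, ⟨y, hyK, rfl⟩, fun h0 => hy (Subtype.ext h0)⟩
    obtain ⟨P, hPcar, hPsm⟩ := ρT.small_transfer_S_to_R hcM _ hKsm'
    rw [zstar_ne_bot_iff]
    refine ⟨P, hPsm, ?_⟩
    rw [Submodule.ne_bot_iff] at hK'ne ⊢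
    obtain ⟨y, hyK, hy⟩ := hK'ne
    refine ⟨y, ?_, hy⟩
    show y ∈ (P : Set M)
    rw [hPcar]
    exact hyK
  · -- Q part
    intro M iM1 iM2 hk
    rw [zstar_eq_bot_iff]
    intro P hP
    letI iSP : Module S ↥P := ρS.module ↥P (by
      intro x
      apply Subtype.ext
      show (1 - ρS.σ 1) • (x : M) = 0
      rw [hσS1, sub_sub_cancel]
      exact hk (x : M))
    have hcP : ∀ (s : S) (x : ↥P), s • x = ρS.σ s • x := fun s x => rfl
    have hsmS : IsSmallModule S ↥P := ρS.small_S_of_small_R hcP hP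
    have hall := vring_small hS hsmS
    rw [Submodule.eq_bot_iff]
    intro x hx
    exact congrArg Subtype.val (hall ⟨x, hx⟩)

end GOR
end Stmt10
namespace Stmt10

section LHSSec

variable {R : Type u} [Ring R]

theorem good_of_lhs
    (hsplit : ∀ (M : Type u) [AddCommGroup M] [Module R M],
        ∃ T F : Submodule R M, IsCompl T F ∧ IsCGTorsion R ↥T ∧ ZStar R ↥F = ⊥)
    (hcoher : ∀ (M : Type u) [AddCommGroup M] [Module R M] (N : Type u) [AddCommGroup N]
        [Module R N] (f : M →ₗ[R] N), Function.Surjective f → ZStar R M = ⊥ → ZStar R N = ⊥) :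
    ∃ e : R, GoodIdem R e := by
  obtain ⟨T, F, hTF, htor, htf⟩ := hsplit R
  have hT2 : ∀ t ∈ T, ∀ r : R, t * r ∈ T := by
    intro t ht r
    set g : ↥T →ₗ[R] ↥F := (F.linearProjOfIsCompl T hTF.symm) ∘ₗ
      ((LinearMap.toSpanSingleton R R r) ∘ₗ T.subtype) with hgdef
    have hrb : LinearMap.range g = ⊥ := by
      by_contra hne
      exact (torsion_image htor g hne) (zstar_hered htf _)
    have hg0 : g ⟨t, ht⟩ = 0 := by
      have hmem : g ⟨t, ht⟩ ∈ LinearMap.range g := ⟨_, rfl⟩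
      rw [hrb] at hmem
      exact (Submodule.mem_bot R).mp hmem
    have hker : t * r ∈ LinearMap.ker (F.projectionOnto T hTF.symm) := by
      rw [LinearMap.mem_ker, ← smul_eq_mul]
      exact hg0
    rwa [Submodule.ker_projectionOnto] at hker
  have hF2 : ∀ y ∈ F, ∀ r : R, y * r ∈ F := by
    intro y hy r
    set g : ↥F →ₗ[R] ↥T := (T.linearProjOfIsCompl F hTF) ∘ₗ
      ((LinearMap.toSpanSingleton R R r) ∘ₗ F.subtype) with hgdef
    have hrb : LinearMap.range g = ⊥ := by
      by_contra hne
      have h1 : ZStar R ↥(LinearMap.range g) ≠ ⊥ := torsion_sub htor hne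
      have h2 : ZStar R ↥(LinearMap.range g) = ⊥ :=
        hcoher ↥F ↥(LinearMap.range g) g.rangeRestrict (LinearMap.surjective_rangeRestrict g) htf
      exact h1 h2
    have hg0 : g ⟨y, hy⟩ = 0 := by
      have hmem : g ⟨y, hy⟩ ∈ LinearMap.range g := ⟨_, rfl⟩
      rw [hrb] at hmem
      exact (Submodule.mem_bot R).mp hmem
    have hker : y * r ∈ LinearMap.ker (T.projectionOnto F hTF) := by
      rw [LinearMap.mem_ker, ← smul_eq_mul]
      exact hg0
    rwa [Submodule.ker_projectionOnto] at hker
  have h1mem : (1 : R) ∈ T ⊔ F := by rw [hTF.sup_eq_top]; trivial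
  obtain ⟨e, he, f₀, hf₀, hef⟩ := Submodule.mem_sup.mp h1mem
  have hdisj : ∀ x : R, x ∈ T → x ∈ F → x = 0 := fun x hxT hxF =>
    Submodule.disjoint_def.mp hTF.disjoint x hxT hxF
  have hsmulT : ∀ (r : R), ∀ t ∈ T, r * t ∈ T := fun r t ht => by
    have := T.smul_mem r ht; rwa [smul_eq_mul] at this
  have hsmulF : ∀ (r : R), ∀ y ∈ F, r * y ∈ F := fun r y hy => by
    have := F.smul_mem r hy; rwa [smul_eq_mul] at this
  have hcen : ∀ r : R, e * r = r * e := by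
    intro r
    have key : e * r + f₀ * r = r * e + r * f₀ := by
      rw [← add_mul, hef, one_mul, ← mul_add, hef, mul_one]
    have h5 : e * r - r * e = r * f₀ - f₀ * r := by
      rw [sub_eq_sub_iff_add_eq_add, key]
      abel
    have h3 : e * r - r * e ∈ T := T.sub_mem (hT2 e he r) (hsmulT r e he)
    have h4 : e * r - r * e ∈ F := by
      rw [h5]
      exact F.sub_mem (hsmulF r f₀ hf₀) (hF2 f₀ hf₀ r)
    exact sub_eq_zero.mp (hdisj _ h3 h4)
  have he2 : e * e = e := by
    have h1 : e = e * e + e * f₀ := by rw [← mul_add, hef, mul_one]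
    have h2 : e - e * e = e * f₀ := sub_eq_iff_eq_add'.mpr h1
    have h3 : e - e * e ∈ T := T.sub_mem he (hT2 e he e)
    have h4 : e - e * e ∈ F := by rw [h2]; exact hsmulF e f₀ hf₀
    exact (sub_eq_zero.mp (hdisj _ h3 h4)).symm
  have hf₀e : f₀ = 1 - e := by rw [← hef]; abel
  refine ⟨e, he2, hcen, ?_, ?_⟩
  · -- P
    intro M iM1 iM2 hk hnz
    obtain ⟨TM, FM, hc', htor', htf'⟩ := hsplit M
    by_cases hTM : TM = ⊥
    · exfalso
      have hFM : FM = ⊤ := by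
        have hst := hc'.sup_eq_top
        rwa [hTM, bot_sup_eq] at hst
      have hMbot : ZStar R M = ⊥ := by
        have h1 : ZStar R ↥(⊤ : Submodule R M) = ⊥ := by rw [← hFM]; exact htf'
        exact zstar_bot_of_equiv (Submodule.topEquiv) h1
      obtain ⟨x, hx⟩ := hnz
      set g : ↥T →ₗ[R] M := (LinearMap.toSpanSingleton R M x) ∘ₗ T.subtype with hgdef
      have hxg : x ∈ LinearMap.range g := by
        refine ⟨⟨e, he⟩, ?_⟩
        show e • x = x
        have h2 := hk x
        rw [sub_smul, one_smul, sub_eq_zero] at h2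
        exact h2.symm
      have hne : LinearMap.range g ≠ ⊥ := fun h0 =>
        hx (by rw [h0] at hxg; exact (Submodule.mem_bot R).mp hxg)
      exact (torsion_image htor g hne) (zstar_hered hMbot _)
    · apply zstar_ne_bot_of_sub (p := TM)
      have hnt : (⊤ : Submodule R ↥TM) ≠ ⊥ := by
        intro h0
        apply hTM
        rw [Submodule.eq_bot_iff]
        intro y hy
        have hmem : (⟨y, hy⟩ : ↥TM) ∈ (⊤ : Submodule R ↥TM) := trivial
        rw [h0] at hmem
        exact congrArg Subtype.val ((Submodule.mem_bot R).mp hmem)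
      have h1 := torsion_sub htor' hnt
      intro hb
      exact h1 (zstar_bot_of_equiv (Submodule.topEquiv).symm hb)
  · -- Q
    intro M iM1 iM2 hk
    obtain ⟨TM, FM, hc', htor', htf'⟩ := hsplit M
    have hTM : TM = ⊥ := by
      by_contra hTM
      obtain ⟨x, hxTM, hx⟩ := (Submodule.ne_bot_iff TM).mp hTM
      set g : ↥F →ₗ[R] M := (LinearMap.toSpanSingleton R M x) ∘ₗ F.subtype with hgdef
      have hxg : x ∈ LinearMap.range g := by
        refine ⟨⟨f₀, hf₀⟩, ?_⟩
        show f₀ • x = x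
        rw [hf₀e, sub_smul, one_smul, hk x, sub_zero]
      have hcoh : ZStar R ↥(LinearMap.range g) = ⊥ :=
        hcoher ↥F ↥(LinearMap.range g) g.rangeRestrict (LinearMap.surjective_rangeRestrict g) htf
      have hle : LinearMap.range g ≤ TM := by
        rintro y ⟨z, rfl⟩
        show (LinearMap.toSpanSingleton R M x) (F.subtype z) ∈ TM
        exact TM.smul_mem _ hxTM
      have hpne : Submodule.comap TM.subtype (LinearMap.range g) ≠ ⊥ := by
        rw [Submodule.ne_bot_iff]
        exact ⟨⟨x, hxTM⟩, hxg, fun h0 => hx (congrArg Subtype.val h0)⟩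
      have h1 : ZStar R ↥(Submodule.comap TM.subtype (LinearMap.range g)) ≠ ⊥ :=
        torsion_sub htor' hpne
      have h2 : ZStar R ↥(Submodule.comap TM.subtype (LinearMap.range g)) = ⊥ :=
        (zstar_congr (Submodule.comapSubtypeEquivOfLe hle)).mpr hcoh
      exact h1 h2
    have hFM : FM = ⊤ := by
      have hst := hc'.sup_eq_top
      rwa [hTM, bot_sup_eq] at hst
    have h1 : ZStar R ↥(⊤ : Submodule R M) = ⊥ := by rw [← hFM]; exact htf'
    exact zstar_bot_of_equiv (Submodule.topEquiv) h1

end LHSSec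
end Stmt10
namespace Stmt10

section LOG

variable {R : Type u} [Ring R]

theorem lhs_of_good (h : ∃ e : R, GoodIdem R e) :
    (∀ (M : Type u) [AddCommGroup M] [Module R M],
        ∃ T F : Submodule R M, IsCompl T F ∧ IsCGTorsion R ↥T ∧ ZStar R ↥F = ⊥) ∧
      (∀ (M : Type u) [AddCommGroup M] [Module R M] (N : Type u) [AddCommGroup N] [Module R N]
        (f : M →ₗ[R] N), Function.Surjective f → ZStar R M = ⊥ → ZStar R N = ⊥) := by
  obtain ⟨e, he, hcen, hP, hQ⟩ := h
  have hcen1e : ∀ r : R, (1 - e) * r = r * (1 - e) := fun r => by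
    rw [sub_mul, mul_sub, one_mul, mul_one, hcen]
  constructor
  · intro M iM1 iM2
    let A : Submodule R M :=
      { carrier := {m | (1 - e) • m = 0}
        add_mem' := fun {a b} ha hb => by
          have ha' : (1 - e) • a = 0 := ha
          have hb' : (1 - e) • b = 0 := hb
          show (1 - e) • (a + b) = 0
          rw [smul_add, ha', hb', add_zero]
        zero_mem' := by show (1 - e) • (0 : M) = 0; rw [smul_zero]
        smul_mem' := fun r m hm => by
          have hm' : (1 - e) • m = 0 := hm
          show (1 - e) • (r • m) = 0
          rw [← mul_smul, hcen1e, mul_smul, hm', smul_zero] }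
    let B : Submodule R M :=
      { carrier := {m | e • m = 0}
        add_mem' := fun {a b} ha hb => by
          have ha' : e • a = 0 := ha
          have hb' : e • b = 0 := hb
          show e • (a + b) = 0
          rw [smul_add, ha', hb', add_zero]
        zero_mem' := by show e • (0 : M) = 0; rw [smul_zero]
        smul_mem' := fun r m hm => by
          have hm' : e • m = 0 := hm
          show e • (r • m) = 0
          rw [← mul_smul, hcen, mul_smul, hm', smul_zero] }
    refine ⟨A, B, ⟨?_, ?_⟩, ?_, ?_⟩
    · rw [Submodule.disjoint_def]
      intro m hmA hmB
      have hmA' : (1 - e) • m = 0 := hmA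
      have hmB' : e • m = 0 := hmB
      have hdec : m = e • m + (1 - e) • m := by
        rw [← add_smul, add_sub_cancel, one_smul]
      rw [hdec, hmA', hmB', add_zero]
    · rw [codisjoint_iff, eq_top_iff]
      intro m _
      have hmA : e • m ∈ A := by
        show (1 - e) • (e • m) = 0
        rw [← mul_smul, sub_mul, one_mul, he, sub_self, zero_smul]
      have hmB : (1 - e) • m ∈ B := by
        show e • ((1 - e) • m) = 0
        rw [← mul_smul, mul_sub, mul_one, he, sub_self, zero_smul]
      exact Submodule.mem_sup.mpr ⟨e • m, hmA, (1 - e) • m, hmB, by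
        rw [← add_smul, add_sub_cancel, one_smul]⟩
    · -- torsion
      intro U V hUV
      apply hP
      · intro w
        obtain ⟨v, rfl⟩ := Submodule.Quotient.mk_surjective _ w
        have hv : (1 - e) • v = (0 : ↥V) := by
          apply Subtype.ext
          apply Subtype.ext
          show (1 - e) • (((v : ↥A) : M)) = 0
          exact (v : ↥A).2
        rw [← Submodule.Quotient.mk_smul, hv]
        exact (Submodule.Quotient.mk_eq_zero _).mpr (Submodule.zero_mem _)
      · haveI := quot_nontrivial hUV
        exact exists_ne 0
    · exact hQ ↥B (fun x => Subtype.ext (x.2 : e • (x : M) = 0))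
  · intro M iM1 iM2 N iN1 iN2 f hf hZM
    apply hQ
    intro n
    obtain ⟨m, rfl⟩ := hf n
    have hAbot : ∀ m' : M, e • m' = 0 := by
      let A : Submodule R M :=
        { carrier := {m' | (1 - e) • m' = 0}
          add_mem' := fun {a b} ha hb => by
            have ha' : (1 - e) • a = 0 := ha
            have hb' : (1 - e) • b = 0 := hb
            show (1 - e) • (a + b) = 0
            rw [smul_add, ha', hb', add_zero]
          zero_mem' := by show (1 - e) • (0 : M) = 0; rw [smul_zero]
          smul_mem' := fun r m' hm => by
            have hm' : (1 - e) • m' = 0 := hm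
            show (1 - e) • (r • m') = 0
            rw [← mul_smul, hcen1e, mul_smul, hm', smul_zero] }
      have hA0 : A = ⊥ := by
        by_contra hA
        have h1 := hP ↥A (fun x => Subtype.ext (x.2 : (1 - e) • (x : M) = 0)) (by
          obtain ⟨x, hxA, hx⟩ := (Submodule.ne_bot_iff A).mp hA
          exact ⟨⟨x, hxA⟩, fun h0 => hx (congrArg Subtype.val h0)⟩)
        exact h1 (zstar_hered hZM A)
      intro m'
      have hmem : e • m' ∈ A := by
        show (1 - e) • (e • m') = 0
        rw [← mul_smul, sub_mul, one_mul, he, sub_self, zero_smul]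
      rw [hA0] at hmem
      exact (Submodule.mem_bot R).mp hmem
    rw [← f.map_smul, hAbot m, f.map_zero]

end LOG
end Stmt10


/-- The dual Goldie torsion theory of `R` is splitting and cohereditary iff `R` is isomorphic, as
a ring, to a product `T × S` with `T` left almost small and `S` a left V-ring. -/
theorem stmt_10 (R : Type u) [Ring R] :
    ((∀ (M : Type u) [AddCommGroup M] [Module R M],
        ∃ T F : Submodule R M, IsCompl T F ∧ IsCGTorsion R ↥T ∧ ZStar R ↥F = ⊥) ∧
      (∀ (M : Type u) [AddCommGroup M] [Module R M] (N : Type u) [AddCommGroup N] [Module R N]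
        (f : M →ₗ[R] N), Function.Surjective f → ZStar R M = ⊥ → ZStar R N = ⊥)) ↔
    (∃ (T S : Type u) (_ : Ring T) (_ : Ring S),
      Nonempty (R ≃+* T × S) ∧ IsCGTorsion T T ∧
        (∀ (M : Type u) [AddCommGroup M] [Module S M], IsSimpleModule S M →
          Module.Injective S M)) := by
  
  constructor
  · rintro ⟨h1, h2⟩
    exact Stmt10.rhs_of_good (Stmt10.good_of_lhs h1 h2)
  · rintro ⟨T, S, iT, iS, ⟨φ⟩, hT, hS⟩
    exact Stmt10.lhs_of_good (Stmt10.good_of_rhs φ hT hS)
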